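/- arXiv:2212.01301 — 3 statements merged into one kernel-verified Lean document; each statement's English description precedes it below -/
import Mathlib

section
/- If L ⊆ Σ* is a semilinear language over a finite alphabet Σ, then the Kleene star L* is a semilinear language. -/
open Pointwise


/-- A set `Q ⊆ ℕ^α` is linear if it has a constant vector `v₀` and finitely many
period vectors `v₁, …, v_l` with `Q = {v₀ + i₁v₁ + ⋯ + i_l v_l}`. -/
def IsLinearSetNat {α : Type*} (Q : Set (α → ℕ)) : Prop :=
  ∃ (v₀ : α → ℕ) (l : ℕ) (v : Fin l → α → ℕ),
    Q = { x | ∃ c : Fin l → ℕ, x = v₀ + ∑ j, c j • v j }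

/-- A set is semilinear if it is a finite union of linear sets. -/
def IsSemilinearSetNat {α : Type*} (Q : Set (α → ℕ)) : Prop :=
  ∃ (n : ℕ) (Qs : Fin n → Set (α → ℕ)),
    (∀ i, IsLinearSetNat (Qs i)) ∧ Q = ⋃ i, Qs i

open Classical in
/-- The Parikh image of a word: `parikhWord w a = |w|_a`. -/
noncomputable def parikhWord {σ : Type*} (w : List σ) : σ → ℕ :=
  fun a => w.count a

/-- A language is semilinear if its Parikh image is a semilinear set. -/
def IsSemilinearLanguage {σ : Type*} (L : Set (List σ)) : Prop :=
  IsSemilinearSetNat (parikhWord '' L)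

/-! ### Auxiliary lemmas -/

/-- The sumset of two linear sets is linear. -/
lemma IsLinearSetNat.add {α : Type*} {A B : Set (α → ℕ)}
    (hA : IsLinearSetNat A) (hB : IsLinearSetNat B) : IsLinearSetNat (A + B) := by
  obtain ⟨a₀, m, u, rfl⟩ := hA
  obtain ⟨b₀, n, w, rfl⟩ := hB
  refine ⟨a₀ + b₀, m + n, Fin.append u w, ?_⟩
  ext x
  simp only [Set.mem_add, Set.mem_setOf_eq]
  constructor
  · rintro ⟨_, ⟨c, rfl⟩, _, ⟨d, rfl⟩, rfl⟩
    refine ⟨Fin.append c d, ?_⟩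
    rw [Fin.sum_univ_add]
    simp only [Fin.append_left, Fin.append_right]
    abel
  · rintro ⟨c, rfl⟩
    refine ⟨a₀ + ∑ j : Fin m, c (Fin.castAdd n j) • u j, ⟨_, rfl⟩,
            b₀ + ∑ j : Fin n, c (Fin.natAdd m j) • w j, ⟨_, rfl⟩, ?_⟩
    rw [Fin.sum_univ_add]
    simp only [Fin.append_left, Fin.append_right]
    abel

/-- The closure (star) of a linear set is semilinear. -/
lemma isSemilinearSet_closure_of_linear {α : Type*} {Q : Set (α → ℕ)}
    (hQ : IsLinearSetNat Q) : IsSemilinearSetNat ((AddSubmonoid.closure Q : AddSubmonoid (α → ℕ)) : Set (α → ℕ)) := by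
  obtain ⟨v₀, l, v, rfl⟩ := hQ
  set P : Set (α → ℕ) :=
    { x | ∃ c : Fin (l + 1) → ℕ, x = v₀ + ∑ j, c j • Fin.snoc v v₀ j } with hP
  have hsum : ∀ c : Fin (l + 1) → ℕ,
      (∑ j, c j • (Fin.snoc v v₀ : Fin (l+1) → α → ℕ) j : α → ℕ)
        = ∑ j : Fin l, c j.castSucc • v j + c (Fin.last l) • v₀ := by
    intro c
    rw [Fin.sum_univ_castSucc]
    simp [Fin.snoc_castSucc, Fin.snoc_last]
  have hPadd : ∀ a b : α → ℕ, a ∈ P → b ∈ P → a + b ∈ P := by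
    rintro _ _ ⟨c, rfl⟩ ⟨d, rfl⟩
    refine ⟨c + d + fun j => if j = Fin.last l then 1 else 0, ?_⟩
    rw [hsum, hsum, hsum]
    simp only [Pi.add_apply, add_smul, Finset.sum_add_distrib]
    have h1 : ∀ j : Fin l,
        ((if (j.castSucc : Fin (l+1)) = Fin.last l then 1 else 0) : ℕ) = 0 := by
      intro j
      rw [if_neg]
      exact (Fin.castSucc_lt_last j).ne
    have h2 : ((if (Fin.last l : Fin (l+1)) = Fin.last l then 1 else 0) : ℕ) = 1 := by
      simp
    simp only [h1, h2, zero_smul, one_smul, Finset.sum_const_zero, add_zero]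
    funext a
    simp only [Pi.add_apply, Finset.sum_apply, Pi.smul_apply, smul_eq_mul, ↓reduceIte]
    ring
  have hQP : ∀ x : α → ℕ, (∃ c : Fin l → ℕ, x = v₀ + ∑ j, c j • v j) → x ∈ P := by
    rintro _ ⟨c, rfl⟩
    refine ⟨Fin.snoc c 0, ?_⟩
    rw [hsum]
    simp [Fin.snoc_castSucc, Fin.snoc_last]
  refine ⟨2, ![{(0 : α → ℕ)}, P], ?_, ?_⟩
  · intro i
    fin_cases i
    · refine ⟨0, 0, fun j => 0, ?_⟩
      ext x; simp [eq_comm]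
    · exact ⟨v₀, l + 1, Fin.snoc v v₀, rfl⟩
  · ext x
    simp only [SetLike.mem_coe]
    constructor
    · intro hx
      induction hx using AddSubmonoid.closure_induction with
      | mem q hq =>
        simp only [Set.mem_iUnion]
        exact ⟨1, by simpa using hQP q hq⟩
      | zero =>
        simp only [Set.mem_iUnion]
        exact ⟨0, by simp⟩
      | add x y hx hy ihx ihy =>
        simp only [Set.mem_iUnion] at ihx ihy ⊢
        obtain ⟨i, hi⟩ := ihx
        obtain ⟨j, hj⟩ := ihy
        have hmem : ∀ z : α → ℕ, ∀ k : Fin 2, z ∈ ![{(0 : α → ℕ)}, P] k → z = 0 ∨ z ∈ P := by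
          intro z k hk
          fin_cases k
          · left; simpa using hk
          · right; simpa using hk
        rcases hmem x i hi with rfl | hxP <;> rcases hmem y j hj with rfl | hyP
        · exact ⟨0, by simp⟩
        · exact ⟨1, by simpa using hyP⟩
        · exact ⟨1, by simpa using hxP⟩
        · exact ⟨1, by simpa using hPadd x y hxP hyP⟩
    · intro hx
      simp only [Set.mem_iUnion] at hx
      obtain ⟨i, hi⟩ := hx
      have : x = 0 ∨ x ∈ P := by
        fin_cases i
        · left; simpa using hi
        · right; simpa using hi
      rcases this with rfl | hxP
      · exact zero_mem _
      · obtain ⟨c, rfl⟩ := hxP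
        rw [hsum, ← add_assoc]
        have h1 : (v₀ + ∑ j : Fin l, c j.castSucc • v j)
            ∈ {x : α → ℕ | ∃ c : Fin l → ℕ, x = v₀ + ∑ j, c j • v j} :=
          ⟨fun j => c j.castSucc, rfl⟩
        have h2 : v₀ ∈ {x : α → ℕ | ∃ c : Fin l → ℕ, x = v₀ + ∑ j, c j • v j} :=
          ⟨0, by simp⟩
        exact add_mem (AddSubmonoid.subset_closure h1)
          (nsmul_mem (AddSubmonoid.subset_closure h2) _)

/-- Closure of a union is the sumset of the closures (as sets). -/
lemma closure_union_eq_add {M : Type*} [AddCommMonoid M] (A B : Set M) :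
    ((AddSubmonoid.closure (A ∪ B) : AddSubmonoid M) : Set M)
      = ((AddSubmonoid.closure A : AddSubmonoid M) : Set M)
        + ((AddSubmonoid.closure B : AddSubmonoid M) : Set M) := by
  ext x
  rw [SetLike.mem_coe, AddSubmonoid.closure_union, AddSubmonoid.mem_sup]
  simp [Set.mem_add]

/-- The sumset of two semilinear sets is semilinear. -/
lemma IsSemilinearSetNat.add {α : Type*} {A B : Set (α → ℕ)}
    (hA : IsSemilinearSetNat A) (hB : IsSemilinearSetNat B) : IsSemilinearSetNat (A + B) := by
  obtain ⟨n, As, hAs, rfl⟩ := hA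
  obtain ⟨m, Bs, hBs, rfl⟩ := hB
  refine ⟨n * m, fun k => As (finProdFinEquiv.symm k).1 + Bs (finProdFinEquiv.symm k).2,
    fun k => (hAs _).add (hBs _), ?_⟩
  ext x
  simp only [Set.mem_add, Set.mem_iUnion]
  constructor
  · rintro ⟨a, ⟨i, ha⟩, b, ⟨j, hb⟩, rfl⟩
    exact ⟨finProdFinEquiv (i, j), Set.add_mem_add (by simpa using ha) (by simpa using hb)⟩
  · rintro ⟨k, hk⟩
    obtain ⟨a, ha, b, hb, rfl⟩ := hk
    exact ⟨a, ⟨_, ha⟩, b, ⟨_, hb⟩, rfl⟩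

/-- The closure of a semilinear set is semilinear. -/
lemma isSemilinearSet_closure {α : Type*} {Q : Set (α → ℕ)}
    (hQ : IsSemilinearSetNat Q) :
    IsSemilinearSetNat ((AddSubmonoid.closure Q : AddSubmonoid (α → ℕ)) : Set (α → ℕ)) := by
  obtain ⟨n, Qs, hQs, rfl⟩ := hQ
  induction n with
  | zero =>
    have : (⋃ i : Fin 0, Qs i) = (∅ : Set (α → ℕ)) := by simp
    rw [this, AddSubmonoid.closure_empty]
    refine ⟨1, fun _ => {(0 : α → ℕ)}, ?_, ?_⟩
    · intro i
      refine ⟨0, 0, fun j => 0, ?_⟩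
      ext x; simp [eq_comm]
    · ext x; simp
  | succ n ih =>
    have hsplit : (⋃ i : Fin (n + 1), Qs i) = Qs 0 ∪ ⋃ i : Fin n, Qs i.succ := by
      ext x
      simp only [Set.mem_iUnion, Set.mem_union]
      constructor
      · rintro ⟨i, hi⟩
        rcases Fin.eq_zero_or_eq_succ i with h | ⟨j, rfl⟩
        · exact Or.inl (h ▸ hi)
        · exact Or.inr ⟨j, hi⟩
      · rintro (h | ⟨j, hj⟩)
        · exact ⟨0, h⟩
        · exact ⟨j.succ, hj⟩
    rw [hsplit, closure_union_eq_add]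
    exact (isSemilinearSet_closure_of_linear (hQs 0)).add
      (ih (fun i => Qs i.succ) (fun i => hQs i.succ))

lemma parikhWord_append {σ : Type*} (u w : List σ) :
    parikhWord (u ++ w) = parikhWord u + parikhWord w := by
  funext a
  simp [parikhWord, List.count_append]

lemma parikhWord_nil {σ : Type*} : parikhWord ([] : List σ) = 0 := by
  funext a; simp [parikhWord]

open scoped Computability in
/-- if L is a semilinear language then its Kleene star L* is semilinear. -/
theorem semilinear_kstar {σ : Type*} [Fintype σ] (L : Language σ)
    (hL : IsSemilinearLanguage L) :
    IsSemilinearLanguage (L∗ : Language σ) := by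
  unfold IsSemilinearLanguage at *
  have key : parikhWord '' (L∗ : Language σ)
      = ((AddSubmonoid.closure (parikhWord '' L) : AddSubmonoid (σ → ℕ)) : Set (σ → ℕ)) := by
    ext x
    constructor
    · rintro ⟨w, hw, rfl⟩
      change w ∈ (L∗ : Language σ) at hw
      rw [Language.mem_kstar] at hw
      obtain ⟨S, rfl, hS⟩ := hw
      induction S with
      | nil => simpa [parikhWord_nil] using zero_mem _
      | cons y S ih =>
        rw [List.flatten_cons, parikhWord_append]
        refine add_mem (AddSubmonoid.subset_closure ⟨y, hS y (by simp), rfl⟩) ?_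
        exact ih (fun z hz => hS z (by simp [hz]))
    · intro hx
      induction hx using AddSubmonoid.closure_induction with
      | mem q hq =>
        obtain ⟨w, hw, rfl⟩ := hq
        exact ⟨w, Language.mem_kstar.mpr ⟨[w], by simp, by simpa using (show w ∈ L from hw)⟩, rfl⟩
      | zero =>
        exact ⟨[], Language.mem_kstar.mpr ⟨[], by simp⟩, parikhWord_nil⟩
      | add a b ha hb iha ihb =>
        obtain ⟨u, hu, rfl⟩ := iha
        obtain ⟨w, hw, rfl⟩ := ihb
        refine ⟨u ++ w, ?_, parikhWord_append u w⟩
        change u ∈ (L∗ : Language σ) at hu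
        change w ∈ (L∗ : Language σ) at hw
        show u ++ w ∈ (L∗ : Language σ)
        rw [Language.mem_kstar] at hu hw ⊢
        obtain ⟨S, rfl, hS⟩ := hu
        obtain ⟨T, rfl, hT⟩ := hw
        refine ⟨S ++ T, by simp, fun y hy => ?_⟩
        rcases List.mem_append.mp hy with h | h
        · exact hS y h
        · exact hT y h
  rw [key]
  exact isSemilinearSet_closure hL
end

section
/- Let Σ and Γ be finite alphabets and h : Γ* → Σ* a weak coding homomorphism, i.e., |h(a)| ≤ 1 for every letter a ∈ Γ. If L ⊆ Σ* is a semilinear language, then h⁻¹(L) = {w ∈ Γ* : h(w) ∈ L} is a semilinear language over Γ. -/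
set_option linter.unusedSectionVars false
set_option linter.deprecated false
set_option maxHeartbeats 1000000

section aux
open Classical
variable {σ γ : Type*} [Fintype σ] [Fintype γ]

noncomputable def push (f : γ → List σ) (y : γ → ℕ) : σ → ℕ :=
  fun a => ∑ b, y b * parikhWord (f b) a

lemma push_add (f : γ → List σ) (y z : γ → ℕ) :
    push f (y + z) = push f y + push f z := by
  funext a
  simp [push, add_mul, Finset.sum_add_distrib]

lemma push_zero (f : γ → List σ) : push f 0 = 0 := by
  funext a; simp [push]

lemma push_smul (f : γ → List σ) (n : ℕ) (y : γ → ℕ) :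
    push f (n • y) = n • push f y := by
  funext a
  simp [push, Finset.mul_sum, mul_assoc]

noncomputable def pushHom (f : γ → List σ) : (γ → ℕ) →+ (σ → ℕ) where
  toFun := push f
  map_zero' := push_zero f
  map_add' := push_add f

lemma push_sum {ι : Type*} (f : γ → List σ) (s : Finset ι) (g : ι → γ → ℕ) :
    push f (∑ j ∈ s, g j) = ∑ j ∈ s, push f (g j) :=
  map_sum (pushHom f) g s

lemma parikh_append (u v : List σ) :
    parikhWord (u ++ v) = parikhWord u + parikhWord v := by
  funext a; simp [parikhWord]

lemma parikh_nil : (parikhWord ([] : List σ)) = 0 := by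
  funext a; simp [parikhWord]

lemma parikh_cons (b : γ) (w : List γ) :
    parikhWord (b :: w) = parikhWord [b] + parikhWord w := by
  funext a; simp [parikhWord, List.count_cons]; ring

lemma parikh_single (b : γ) : parikhWord [b] = Pi.single b 1 := by
  funext b'
  simp only [parikhWord, List.count_singleton, Pi.single_apply, beq_iff_eq]
  rcases eq_or_ne b' b with rfl|h
  · simp
  · simp [h, Ne.symm h]

lemma push_single (f : γ → List σ) (b : γ) :
    push f (parikhWord [b]) = parikhWord (f b) := by
  funext a
  rw [push]
  rw [Finset.sum_eq_single b]
  · simp [parikhWord]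
  · intro b' _ hb'
    simp [parikhWord, List.count_singleton, hb', Ne.symm hb']
  · simp

lemma push_parikh (f : γ → List σ) (w : List γ) :
    push f (parikhWord w) = parikhWord (w.map f).flatten := by
  induction w with
  | nil => funext a; simp [push, parikh_nil]
  | cons b t ih =>
      rw [parikh_cons, push_add, push_single, List.map_cons,
        show (f b :: List.map f t).flatten = f b ++ (List.map f t).flatten from rfl,
        parikh_append, ih]

lemma weak_cases (f : γ → List σ) (hf : ∀ a : γ, (f a).length ≤ 1) (b : γ) :
    f b = [] ∨ ∃ a, f b = [a] := by
  have := hf b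
  rcases hfb : f b with _ | ⟨a, t⟩
  · exact Or.inl rfl
  · right
    refine ⟨a, ?_⟩
    rw [hfb] at this
    simp at this
    simp [this]

lemma push_eq_class_sum (f : γ → List σ) (hf : ∀ a : γ, (f a).length ≤ 1)
    (y : γ → ℕ) (a : σ) :
    push f y a = ∑ b ∈ Finset.univ.filter (fun b => f b = [a]), y b := by
  rw [push, Finset.sum_filter]
  refine Finset.sum_congr rfl (fun b _ => ?_)
  rcases weak_cases f hf b with h | ⟨a', ha'⟩
  · rw [h, if_neg (by simp)]
    simp [parikhWord]
  · rcases eq_or_ne a' a with rfl|hne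
    · rw [ha', if_pos rfl]
      simp [parikhWord]
    · rw [ha', if_neg (by simp [hne])]
      simp [parikhWord, List.count_singleton, Ne.symm hne, hne]

lemma push_eq_zero (f : γ → List σ) (hf : ∀ a : γ, (f a).length ≤ 1)
    (y : γ → ℕ) (h : push f y = 0) : ∀ b, f b ≠ [] → y b = 0 := by
  intro b hb
  rcases weak_cases f hf b with h0 | ⟨a, ha⟩
  · exact absurd h0 hb
  · have h1 : y b ≤ push f y a := by
      rw [push_eq_class_sum f hf]
      exact Finset.single_le_sum (fun i _ => Nat.zero_le _) (by simp [ha])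
    rw [h] at h1
    simpa using h1

lemma parikh_replicate (n : ℕ) (b : γ) :
    parikhWord (List.replicate n b) = fun b' => if b' = b then n else 0 := by
  funext b'
  simp only [parikhWord, List.count_replicate]
  rcases eq_or_ne b' b with rfl|h
  · simp
  · simp [h, Ne.symm h]

lemma exists_word_aux (l : List γ) (hl : l.Nodup) :
    ∀ y : γ → ℕ, (∀ b, b ∉ l → y b = 0) → ∃ w : List γ, parikhWord w = y := by
  induction l with
  | nil =>
      intro y hy
      exact ⟨[], by funext b; simp [parikhWord, hy b (by simp)]⟩
  | cons b t ih =>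
      intro y hy
      obtain ⟨w', hw'⟩ := ih hl.of_cons (Function.update y b 0) (by
        intro b' hb'
        rcases eq_or_ne b' b with rfl|h
        · simp
        · rw [Function.update_of_ne h]
          exact hy b' (by simp_all))
      refine ⟨List.replicate (y b) b ++ w', ?_⟩
      funext b'
      have h1 := congrFun hw' b'
      have h2 := congrFun (parikh_replicate (y b) b) b'
      simp only [parikhWord] at h1 h2 ⊢
      rw [List.count_append, h1, h2]
      rcases eq_or_ne b' b with rfl|h
      · simp
      · rw [Function.update_of_ne h]
        simp [h]

lemma exists_word (y : γ → ℕ) : ∃ w : List γ, parikhWord w = y :=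
  exists_word_aux Finset.univ.toList (Finset.nodup_toList _) y (by simp)

lemma exists_word_eq (f : γ → List σ) (hf : ∀ a : γ, (f a).length ≤ 1) :
    ∀ (u : List σ) (y : γ → ℕ), push f y = parikhWord u →
      ∃ w : List γ, parikhWord w = y ∧ (w.map f).flatten = u := by
  intro u
  induction u with
  | nil =>
      intro y hy
      obtain ⟨w, hw⟩ := exists_word y
      refine ⟨w, hw, ?_⟩
      rw [parikh_nil] at hy
      have hz := push_eq_zero f hf y hy
      rw [List.flatten_eq_nil_iff]
      intro x hx
      rw [List.mem_map] at hx
      obtain ⟨b, hb, rfl⟩ := hx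
      by_contra hne
      have h0 : y b = 0 := hz b hne
      have hc : 0 < List.count b w := List.count_pos_iff.mpr hb
      rw [show List.count b w = parikhWord w b from rfl, hw] at hc
      omega
  | cons a u ih =>
      intro y hy
      have hpos : 0 < push f y a := by
        rw [hy]; simp [parikhWord]
      rw [push] at hpos
      obtain ⟨b, -, hb⟩ := Finset.exists_ne_zero_of_sum_ne_zero (Nat.pos_iff_ne_zero.mp hpos)
      have hb2 := Nat.mul_ne_zero_iff.mp hb
      have hyb : 0 < y b ∧ 0 < parikhWord (f b) a := by omega
      have hfb : f b = [a] := by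
        rcases weak_cases f hf b with h | ⟨a', ha'⟩
        · exfalso
          have := hyb.2
          rw [h] at this
          simp [parikhWord] at this
        · have := hyb.2
          rw [ha'] at this
          simp only [parikhWord, List.count_singleton, beq_iff_eq] at this
          have heq : a = a' := by
            by_contra hne
            rw [if_neg (fun hh => hne hh.symm)] at this
            omega
          rw [ha', heq]
      set y' := Function.update y b (y b - 1) with hy'
      have hdec : y = y' + parikhWord [b] := by
        funext b'
        rcases eq_or_ne b' b with rfl|h
        · simp [hy', parikhWord]
          omega
        · simp [hy', Function.update_of_ne h, parikhWord, List.count_singleton, h, Ne.symm h]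
      have hpush : push f y' = parikhWord u := by
        have h1 : push f y = push f y' + parikhWord (f b) := by
          rw [hdec, push_add, push_single]
        rw [hfb] at h1
        have h2 : parikhWord (a :: u) = parikhWord [a] + parikhWord u := parikh_cons a u
        rw [hy, h2] at h1
        funext a'
        have := congrFun h1 a'
        simp only [Pi.add_apply] at this
        omega
      obtain ⟨w', hw1, hw2⟩ := ih y' hpush
      refine ⟨b :: w', ?_, ?_⟩
      · rw [parikh_cons, hw1, hdec, add_comm]
      · simp [hw2, hfb]

lemma parikh_image_eq (f : γ → List σ) (hf : ∀ a : γ, (f a).length ≤ 1)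
    (L : Set (List σ)) :
    parikhWord '' {w : List γ | (w.map f).flatten ∈ L} = push f ⁻¹' (parikhWord '' L) := by
  ext y
  constructor
  · rintro ⟨w, hw, rfl⟩
    exact ⟨(w.map f).flatten, hw, (push_parikh f w).symm⟩
  · rintro ⟨u, hu, hpu⟩
    obtain ⟨w, hw1, hw2⟩ := exists_word_eq f hf u y hpu.symm
    exact ⟨w, by rw [Set.mem_setOf_eq, hw2]; exact hu, hw1⟩

lemma split_finset (S : Finset γ) :
    ∀ (g : γ → ℕ) (p q : ℕ), (∑ b ∈ S, g b) = p + q →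
      ∃ g₁ : γ → ℕ, (∀ b, g₁ b ≤ g b) ∧ ((∑ b ∈ S, g₁ b) = p) ∧ ∀ b ∉ S, g₁ b = 0 := by
  induction S using Finset.induction with
  | empty =>
      intro g p q h
      simp at h
      exact ⟨0, fun b => Nat.zero_le _, by simp; omega, fun b _ => rfl⟩
  | insert _ _ ha =>
      rename_i a S ih
      intro g p q h
      rw [Finset.sum_insert ha] at h
      set t := min (g a) p with ht
      have h1 : (∑ b ∈ S, g b) = (p - t) + ((∑ b ∈ S, g b) - (p - t)) := by omega
      obtain ⟨g₁', hle, hsum, hoff⟩ := ih g (p - t) _ h1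
      refine ⟨Function.update g₁' a t, ?_, ?_, ?_⟩
      · intro b
        rcases eq_or_ne b a with rfl|hb
        · simp; omega
        · rw [Function.update_of_ne hb]; exact hle b
      · rw [Finset.sum_insert ha, Function.update_self,
          Finset.sum_congr rfl (fun b hb => Function.update_of_ne (by rintro rfl; exact ha hb) t g₁'),
          hsum]
        omega
      · intro b hb
        simp at hb
        rw [Function.update_of_ne hb.1]
        exact hoff b hb.2

lemma push_split (f : γ → List σ) (hf : ∀ a : γ, (f a).length ≤ 1)
    (y : γ → ℕ) (u₁ u₂ : σ → ℕ) (h : push f y = u₁ + u₂) :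
    ∃ y₁ y₂ : γ → ℕ, y = y₁ + y₂ ∧ push f y₁ = u₁ ∧ push f y₂ = u₂ ∧
      ∀ b, f b = [] → y₁ b = 0 := by
  have hcls : ∀ a : σ, ∃ g₁ : γ → ℕ, (∀ b, g₁ b ≤ y b) ∧
      ((∑ b ∈ Finset.univ.filter (fun b => f b = [a]), g₁ b) = u₁ a) ∧
      ∀ b ∉ Finset.univ.filter (fun b => f b = [a]), g₁ b = 0 := by
    intro a
    refine split_finset _ y (u₁ a) (u₂ a) ?_
    rw [← push_eq_class_sum f hf, h]; rfl
  choose g₁ hg1le hg1sum hg1off using hcls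
  let y₁ : γ → ℕ := fun b => if hb : ∃ a, f b = [a] then g₁ hb.choose b else 0
  have hy₁b : ∀ b, y₁ b = if hb : ∃ a, f b = [a] then g₁ hb.choose b else 0 :=
    fun b => rfl
  have hy₁le : ∀ b, y₁ b ≤ y b := by
    intro b
    rw [hy₁b b]
    split
    · exact hg1le _ b
    · exact Nat.zero_le _
  have hy₁cls : ∀ a b, f b = [a] → y₁ b = g₁ a b := by
    intro a b hb
    have hex : ∃ a', f b = [a'] := ⟨a, hb⟩
    have h2 : a = hex.choose := by simpa using hb.symm.trans hex.choose_spec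
    rw [hy₁b b, dif_pos hex, ← h2]
  have hpush1 : push f y₁ = u₁ := by
    funext a
    rw [push_eq_class_sum f hf]
    rw [← hg1sum a]
    refine Finset.sum_congr rfl (fun b hb => ?_)
    simp at hb
    exact hy₁cls a b hb
  refine ⟨y₁, fun b => y b - y₁ b, ?_, hpush1, ?_, ?_⟩
  · funext b
    simp
    have := hy₁le b
    omega
  · have hsplit : y = y₁ + fun b => y b - y₁ b := by
      funext b; simp; have := hy₁le b; omega
    have h3 := h
    rw [hsplit, push_add, hpush1] at h3
    funext a
    have h4 := congrFun h3 a
    simp at h4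
    omega
  · intro b hb
    rw [hy₁b b, dif_neg]
    rintro ⟨a, ha⟩
    rw [hb] at ha
    exact absurd ha (by simp)

noncomputable def Fset (f : γ → List σ) (u : σ → ℕ) : Set (γ → ℕ) :=
  {y | push f y = u ∧ ∀ b, f b = [] → y b = 0}

lemma Fset_finite (f : γ → List σ) (hf : ∀ a : γ, (f a).length ≤ 1) (u : σ → ℕ) :
    (Fset f u).Finite := by
  have hsub : Fset f u ⊆ Set.pi Set.univ (fun _ : γ => Set.Iic (∑ a, u a)) := by
    intro y hy b _
    rcases weak_cases f hf b with h | ⟨a, ha⟩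
    · simp [Set.mem_Iic, hy.2 b h]
    · have h1 : y b ≤ push f y a := by
        rw [push_eq_class_sum f hf]
        exact Finset.single_le_sum (fun i _ => Nat.zero_le _) (by simp [ha])
      have h2 : push f y a = u a := congrFun hy.1 a
      have h3 : u a ≤ ∑ a, u a :=
        Finset.single_le_sum (fun i _ => Nat.zero_le _) (Finset.mem_univ a)
      simp only [Set.mem_Iic]
      omega
  exact (Set.Finite.pi (fun b => Set.finite_Iic _)).subset hsub

lemma mem_closure_iff_comb (S : Finset (γ → ℕ)) (x : γ → ℕ) :
    x ∈ AddSubmonoid.closure (S : Set (γ → ℕ)) ↔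
      ∃ c : Fin S.card → ℕ, x = ∑ j, c j • ((S.equivFin.symm j : γ → ℕ)) := by
  constructor
  · intro hx
    induction hx using AddSubmonoid.closure_induction with
    | mem z hz =>
        refine ⟨fun j => if j = S.equivFin ⟨z, hz⟩ then 1 else 0, ?_⟩
        rw [Finset.sum_congr rfl (fun j _ => ?_), Finset.sum_ite_eq'
          Finset.univ (S.equivFin ⟨z, hz⟩) (fun j => ((S.equivFin.symm j : γ → ℕ)))]
        · simp
        · rcases eq_or_ne j (S.equivFin ⟨z, hz⟩) with rfl|h
          · simp
          · simp [h]
    | zero => exact ⟨0, by simp⟩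
    | add z w hz hw ihz ihw =>
        obtain ⟨c₁, rfl⟩ := ihz
        obtain ⟨c₂, rfl⟩ := ihw
        exact ⟨c₁ + c₂, by simp [add_smul, Finset.sum_add_distrib]⟩
  · rintro ⟨c, rfl⟩
    refine AddSubmonoid.sum_mem _ (fun j _ => AddSubmonoid.nsmul_mem _ ?_ _)
    exact AddSubmonoid.subset_closure (S.equivFin.symm j).2

lemma sum_single_pi (y : γ → ℕ) : y = ∑ b, y b • Pi.single b 1 := by
  funext b'
  rw [Finset.sum_apply]
  have hterm : ∀ b ∈ Finset.univ, (y b • (Pi.single b 1 : γ → ℕ)) b' = if b' = b then y b else 0 := by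
    intro b _
    rcases eq_or_ne b' b with rfl|h
    · simp
    · simp [Pi.single_apply, h]
  rw [Finset.sum_congr rfl hterm, Finset.sum_ite_eq Finset.univ b' y]
  simp

lemma mem_closure_of_push (f : γ → List σ) (hf : ∀ a : γ, (f a).length ≤ 1)
    (l : ℕ) (v : Fin l → σ → ℕ) (G : Set (γ → ℕ))
    (hG1 : ∀ j, Fset f (v j) ⊆ G)
    (hG2 : ∀ b, f b = [] → Pi.single b 1 ∈ G) :
    ∀ (n : ℕ) (c : Fin l → ℕ) (z : γ → ℕ), (∑ j, c j) = n →
      push f z = ∑ j, c j • v j → z ∈ AddSubmonoid.closure G := by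
  intro n
  induction n with
  | zero =>
      intro c z hc hz
      have hc0 : ∀ j, c j = 0 := by
        intro j
        have := Finset.sum_eq_zero_iff.mp hc j (Finset.mem_univ j)
        exact this
      have hz0 : push f z = 0 := by
        rw [hz, Finset.sum_eq_zero (fun j _ => by rw [hc0 j, zero_smul])]
      have hzz := push_eq_zero f hf z hz0
      rw [sum_single_pi z]
      refine AddSubmonoid.sum_mem _ (fun b _ => ?_)
      by_cases hb : z b = 0
      · rw [hb, zero_smul]
        exact zero_mem _
      · have hfb : f b = [] := by
          by_contra hne
          exact hb (hzz b hne)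
        exact AddSubmonoid.nsmul_mem _ (AddSubmonoid.subset_closure (hG2 b hfb)) _
  | succ n ih =>
      intro c z hc hz
      have hex : ∃ j₀, c j₀ ≠ 0 := by
        by_contra h
        push_neg at h
        rw [Finset.sum_eq_zero (fun j _ => h j)] at hc
        omega
      obtain ⟨j₀, hj₀⟩ := hex
      set c' := Function.update c j₀ (c j₀ - 1) with hc'
      have hcc : ∀ j, c j = c' j + (if j = j₀ then 1 else 0) := by
        intro j
        rcases eq_or_ne j j₀ with rfl|h
        · simp [hc']
          omega
        · simp [hc', Function.update_of_ne h, h]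
      have hsum' : (∑ j, c' j) = n := by
        have : (∑ j, c j) = (∑ j, c' j) + (∑ j, if j = j₀ then 1 else 0) := by
          rw [← Finset.sum_add_distrib]
          exact Finset.sum_congr rfl (fun j _ => hcc j)
        rw [Finset.sum_ite_eq' Finset.univ j₀ (fun _ => 1)] at this
        simp at this
        omega
      have hdecomp : (∑ j, c j • v j) = v j₀ + ∑ j, c' j • v j := by
        have h1 : (∑ j, c j • v j) = (∑ j, c' j • v j) + ∑ j, (if j = j₀ then 1 else 0) • v j := by
          rw [← Finset.sum_add_distrib]
          refine Finset.sum_congr rfl (fun j _ => ?_)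
          rw [hcc j, add_smul]
        have h2 : (∑ j, (if j = j₀ then 1 else 0) • v j) = v j₀ := by
          rw [Finset.sum_congr rfl (fun j _ => show ((if j = j₀ then 1 else 0) : ℕ) • v j =
            if j = j₀ then v j else 0 by
              rcases eq_or_ne j j₀ with rfl|h
              · simp
              · simp [h]),
            Finset.sum_ite_eq' Finset.univ j₀ v]
          simp
        rw [h1, h2, add_comm]
      rw [hdecomp] at hz
      obtain ⟨z₁, z₂, rfl, h1, h2, h3⟩ := push_split f hf z _ _ hz
      exact add_mem (AddSubmonoid.subset_closure (hG1 j₀ ⟨h1, h3⟩)) (ih c' z₂ hsum' h2)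

lemma isSemilinear_preimage_push (f : γ → List σ) (hf : ∀ a : γ, (f a).length ≤ 1)
    (Q : Set (σ → ℕ)) (hQ : IsLinearSetNat Q) : IsSemilinearSetNat (push f ⁻¹' Q) := by
  obtain ⟨v₀, l, v, rfl⟩ := hQ
  set G : Set (γ → ℕ) :=
    (⋃ j, Fset f (v j)) ∪ ((fun b => Pi.single b 1) '' {b | f b = []}) with hG
  have hGfin : G.Finite :=
    Set.Finite.union (Set.finite_iUnion fun j => Fset_finite f hf (v j)) (Set.toFinite _)
  set GF := hGfin.toFinset with hGF
  set vper : Fin GF.card → γ → ℕ := fun j => (GF.equivFin.symm j : γ → ℕ) with hvper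
  have hF0 : (Fset f v₀).Finite := Fset_finite f hf v₀
  set F0 := hF0.toFinset with hF0'
  refine ⟨F0.card, fun i => {x | ∃ c : Fin GF.card → ℕ,
    x = (F0.equivFin.symm i : γ → ℕ) + ∑ j, c j • vper j},
    fun i => ⟨_, _, vper, rfl⟩, ?_⟩
  ext x
  simp only [Set.mem_preimage, Set.mem_setOf_eq, Set.mem_iUnion]
  constructor
  · rintro ⟨c, hc⟩
    obtain ⟨p, z, rfl, hp, hz, hp0⟩ := push_split f hf x v₀ _ hc
    have hpF : p ∈ F0 := hF0.mem_toFinset.mpr ⟨hp, hp0⟩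
    have hzG : z ∈ AddSubmonoid.closure G :=
      mem_closure_of_push f hf l v G
        (fun j y hy => Or.inl (Set.mem_iUnion.mpr ⟨j, hy⟩))
        (fun b hb => Or.inr ⟨b, hb, rfl⟩) _ c z rfl hz
    rw [show G = ↑GF from (hGfin.coe_toFinset).symm] at hzG
    obtain ⟨d, hd⟩ := (mem_closure_iff_comb GF z).mp hzG
    refine ⟨F0.equivFin ⟨p, hpF⟩, d, ?_⟩
    rw [Equiv.symm_apply_apply, hd]
  · rintro ⟨i, c, rfl⟩
    set p := (F0.equivFin.symm i : γ → ℕ) with hp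
    have hpF : p ∈ Fset f v₀ := hF0.mem_toFinset.mp (F0.equivFin.symm i).2
    have hper : ∀ j, ∃ e : Fin l → ℕ, push f (vper j) = ∑ k, e k • v k := by
      intro j
      have hmem : vper j ∈ G := by
        rw [← hGfin.coe_toFinset]
        exact (GF.equivFin.symm j).2
      rw [hG] at hmem
      rcases hmem with hmem | ⟨b, hb, hb2⟩
      · rw [Set.mem_iUnion] at hmem
        obtain ⟨k₀, hk⟩ := hmem
        refine ⟨fun k => if k = k₀ then 1 else 0, ?_⟩
        rw [hk.1]
        rw [Finset.sum_congr rfl (fun k _ => show ((if k = k₀ then 1 else 0) : ℕ) • v k =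
          if k = k₀ then v k else 0 by
            rcases eq_or_ne k k₀ with rfl|h
            · simp
            · simp [h]),
          Finset.sum_ite_eq' Finset.univ k₀ v]
        simp
      · refine ⟨0, ?_⟩
        have hb2' : Pi.single b 1 = vper j := hb2
        have hbnil : f b = [] := hb
        rw [← hb2', ← parikh_single, push_single, hbnil, parikh_nil]
        simp
    choose e he using hper
    refine ⟨fun k => ∑ j, c j * e j k, ?_⟩
    rw [push_add, hpF.1]
    congr 1
    rw [push_sum f Finset.univ (fun j => c j • vper j)]
    rw [Finset.sum_congr rfl (fun j _ => by rw [push_smul, he j, Finset.smul_sum])]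
    rw [Finset.sum_comm]
    refine Finset.sum_congr rfl (fun k _ => ?_)
    rw [Finset.sum_smul]
    refine Finset.sum_congr rfl (fun j _ => ?_)
    rw [smul_smul]

lemma isSemilinearSet_iUnion {α : Type*} {n : ℕ} (Q : Fin n → Set (α → ℕ))
    (h : ∀ i, IsSemilinearSetNat (Q i)) : IsSemilinearSetNat (⋃ i, Q i) := by
  choose m Qs hlin hunion using h
  let ι := (i : Fin n) × Fin (m i)
  let e := (Fintype.equivFin ι).symm
  refine ⟨Fintype.card ι, fun k => Qs (e k).1 (e k).2, fun k => hlin _ _, ?_⟩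
  ext x
  simp only [Set.mem_iUnion]
  constructor
  · rintro ⟨i, hx⟩
    rw [hunion i, Set.mem_iUnion] at hx
    obtain ⟨j, hx⟩ := hx
    refine ⟨(Fintype.equivFin ι) ⟨i, j⟩, ?_⟩
    have he : e ((Fintype.equivFin ι) ⟨i, j⟩) = ⟨i, j⟩ :=
      (Fintype.equivFin ι).symm_apply_apply _
    rw [he]
    exact hx
  · rintro ⟨k, hx⟩
    exact ⟨(e k).1, by rw [hunion, Set.mem_iUnion]; exact ⟨(e k).2, hx⟩⟩

end aux

/-- the inverse image of a semilinear language under a weak coding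
homomorphism (|h(a)| ≤ 1 for every letter a) is semilinear. -/
theorem semilinear_inv_weak_coding {σ γ : Type*} [Fintype σ] [Fintype γ]
    (f : γ → List σ) (hf : ∀ a : γ, (f a).length ≤ 1)
    (L : Set (List σ)) (hL : IsSemilinearLanguage L) :
    IsSemilinearLanguage { w : List γ | (w.map f).flatten ∈ L } := by
  obtain ⟨n, Qs, hlin, hunion⟩ := hL
  unfold IsSemilinearLanguage
  rw [parikh_image_eq f hf L, hunion, Set.preimage_iUnion]
  exact isSemilinearSet_iUnion _ (fun i => isSemilinear_preimage_push f hf (Qs i) (hlin i))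
end

section
/- The set {(i, j) ∈ ℕ² : i ≥ 1, j ≥ 1, and i divides j} is not a semilinear subset of ℕ². (Equivalently, the language {a^i b^j : i, j ≥ 1, j divisible by i} is not a semilinear language.) -/
/-- Key number-theoretic lemma: if `m + k*a ∣ m² + k*b` for all `k`, with `b < m`,
then either `a = b = 0` or `a ≥ 1` and `b = a * m`. -/
lemma key_nt (m a b : ℕ) (hm : 1 ≤ m) (hb : b < m)
    (h : ∀ k : ℕ, (m + k * a) ∣ (m ^ 2 + k * b)) (hne : ¬(a = 0 ∧ b = 0)) :
    1 ≤ a ∧ b = a * m := by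
  rcases Nat.eq_zero_or_pos a with ha | ha
  · exfalso
    apply hne
    refine ⟨ha, ?_⟩
    have h1 := h 1
    rw [ha, mul_zero, add_zero, one_mul] at h1
    have hmb : m ∣ b := (Nat.dvd_add_right (dvd_pow_self m two_ne_zero)).mp h1
    exact Nat.eq_zero_of_dvd_of_lt hmb hb
  · refine ⟨ha, ?_⟩
    by_contra hne2
    set k : ℕ := m * (a * m + b) + 1 with hk
    have hdvd := h k
    have hz : ((m + k * a : ℕ) : ℤ) ∣ ((m : ℤ) * ((a : ℤ) * m - b)) := by
      have h1 : ((m + k * a : ℕ) : ℤ) ∣ ((m ^ 2 + k * b : ℕ) : ℤ) :=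
        Int.natCast_dvd_natCast.mpr hdvd
      have h2 : ((m + k * a : ℕ) : ℤ) ∣ (a : ℤ) * ((m ^ 2 + k * b : ℕ) : ℤ) := h1.mul_left _
      have h3 : ((m + k * a : ℕ) : ℤ) ∣ (b : ℤ) * ((m + k * a : ℕ) : ℤ) := dvd_mul_left _ _
      have h4 := dvd_sub h2 h3
      have heq : (a : ℤ) * ((m ^ 2 + k * b : ℕ) : ℤ) - (b : ℤ) * ((m + k * a : ℕ) : ℤ)
          = (m : ℤ) * ((a : ℤ) * m - b) := by push_cast; ring
      rwa [heq] at h4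
    have hz2 : (a : ℤ) * m - b ≠ 0 := by
      intro hc
      apply hne2
      have hb2 : (b : ℤ) = (a : ℤ) * m := by linarith
      exact_mod_cast hb2
    have hm0 : (m : ℤ) ≠ 0 := by exact_mod_cast Nat.one_le_iff_ne_zero.mp hm
    have hpos : (0 : ℤ) < |(m : ℤ) * ((a : ℤ) * m - b)| :=
      abs_pos.mpr (mul_ne_zero hm0 hz2)
    have hle : ((m + k * a : ℕ) : ℤ) ≤ |(m : ℤ) * ((a : ℤ) * m - b)| :=
      Int.le_of_dvd hpos ((dvd_abs _ _).mpr hz)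
    have habs : |(m : ℤ) * ((a : ℤ) * m - b)| ≤ (m : ℤ) * ((a : ℤ) * m + b) := by
      rw [abs_mul, abs_of_nonneg (show (0:ℤ) ≤ (m:ℤ) by positivity)]
      apply mul_le_mul_of_nonneg_left _ (by positivity)
      have hA : (0 : ℤ) ≤ (a : ℤ) * m := by positivity
      have hB : (0 : ℤ) ≤ (b : ℤ) := by positivity
      rw [abs_le]
      constructor <;> linarith
    have hcontra : ((m + k * a : ℕ) : ℤ) ≤ (m : ℤ) * ((a : ℤ) * m + b) :=
      le_trans hle habs
    have hn : m + k * a ≤ m * (a * m + b) := by exact_mod_cast hcontra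
    have hka : k ≤ k * a := Nat.le_mul_of_pos_right k ha
    linarith

/-- the set {(i, j) ∈ ℕ² : i ≥ 1, j ≥ 1, i divides j} is not a
semilinear subset of ℕ². -/
theorem divisibility_not_semilinear :
    ¬ IsSemilinearSetNat { v : Fin 2 → ℕ | 1 ≤ v 0 ∧ 1 ≤ v 1 ∧ v 0 ∣ v 1 } := by
  intro h
  obtain ⟨n, Qs, hlin, hEq⟩ := h
  set x : ℕ → (Fin 2 → ℕ) := fun m => ![m + 1, (m + 1) ^ 2] with hx
  have hx0 : ∀ m, x m 0 = m + 1 := fun m => rfl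
  have hx1 : ∀ m, x m 1 = (m + 1) ^ 2 := fun m => rfl
  have hsub : ∀ i, Qs i ⊆ { v : Fin 2 → ℕ | 1 ≤ v 0 ∧ 1 ≤ v 1 ∧ v 0 ∣ v 1 } := by
    intro i y hy
    rw [hEq]
    exact Set.mem_iUnion.mpr ⟨i, hy⟩
  have hxD : ∀ m, x m ∈ { v : Fin 2 → ℕ | 1 ≤ v 0 ∧ 1 ≤ v 1 ∧ v 0 ∣ v 1 } := by
    intro m
    refine ⟨by rw [hx0]; omega, by rw [hx1]; exact Nat.one_le_pow 2 (m+1) (by omega), ?_⟩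
    rw [hx0, hx1]
    exact dvd_pow_self (m + 1) two_ne_zero
  have hxQ : ∀ m, ∃ i, x m ∈ Qs i := by
    intro m
    have h2 := hxD m
    rw [hEq] at h2
    exact Set.mem_iUnion.mp h2
  choose g hg using hxQ
  obtain ⟨i, hib⟩ := Finite.exists_infinite_fiber g
  have hIinf : (g ⁻¹' {i}).Infinite := Set.infinite_coe_iff.mp hib
  obtain ⟨v₀, l, v, hQ⟩ := hlin i
  set B : ℕ := v₀ 0 + ∑ j, v j 1 with hB
  set I : Set ℕ := (g ⁻¹' {i}) \ Set.Iio B with hI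
  have hIinf2 : I.Infinite := hIinf.diff (Set.finite_Iio B)
  have key : ∀ m ∈ I, ∃ j : Fin l, 1 ≤ v j 0 ∧ v j 1 = v j 0 * (m + 1) := by
    intro m hm
    have hmB : B ≤ m := not_lt.mp hm.2
    have hmem : x m ∈ Qs i := by
      have hgm : g m = i := hm.1
      rw [← hgm]; exact hg m
    rw [hQ] at hmem
    obtain ⟨c, hc⟩ := hmem
    have hexj : ∃ j, c j ≠ 0 ∧ v j ≠ 0 := by
      by_contra hcon
      push_neg at hcon
      have hsum : ∑ j, c j • v j = 0 := by
        apply Finset.sum_eq_zero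
        intro j _
        rcases Nat.eq_zero_or_pos (c j) with h0 | h0
        · simp [h0]
        · simp [hcon j h0.ne']
      rw [hsum, add_zero] at hc
      have : x m 0 = v₀ 0 := by rw [hc]
      rw [hx0] at this
      have hv0B : v₀ 0 ≤ B := Nat.le_add_right _ _
      omega
    obtain ⟨j, hcj, hvj⟩ := hexj
    refine ⟨j, ?_⟩
    have hbB : v j 1 < m + 1 := by
      have h1 : v j 1 ≤ ∑ j', v j' 1 :=
        Finset.single_le_sum (f := fun j' => v j' 1) (fun _ _ => Nat.zero_le _)
          (Finset.mem_univ j)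
      omega
    have hdvd : ∀ k : ℕ, (m + 1 + k * v j 0) ∣ ((m + 1) ^ 2 + k * v j 1) := by
      intro k
      have hmem2 : x m + k • v j ∈ Qs i := by
        rw [hQ]
        refine ⟨fun j' => c j' + if j' = j then k else 0, ?_⟩
        have hs : ∑ j', (c j' + if j' = j then k else 0) • v j'
            = (∑ j', c j' • v j') + k • v j := by
          rw [Finset.sum_congr rfl (fun j' _ => add_smul _ _ _), Finset.sum_add_distrib]
          congr 1
          rw [Finset.sum_congr rfl
            (g := fun j' => if j' = j then k • v j' else 0)
            (fun j' _ => by split <;> simp [*]),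
            Finset.sum_ite_eq' Finset.univ j (fun j' => k • v j')]
          simp
        rw [hc, hs]
        abel
      have hmemD := hsub i hmem2
      obtain ⟨_, _, hdv⟩ := hmemD
      simpa [Pi.add_apply, Pi.smul_apply, hx0, hx1, smul_eq_mul] using hdv
    have hne : ¬ (v j 0 = 0 ∧ v j 1 = 0) := by
      rintro ⟨h1, h2⟩
      apply hvj
      funext t
      fin_cases t <;> simpa
    exact key_nt (m + 1) (v j 0) (v j 1) (Nat.succ_le_succ (Nat.zero_le m)) hbB hdvd hne
  choose F hF1 hF2 using key
  have hinj : Function.Injective (fun m : I => F m m.2) := by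
    intro m m' hmm
    simp only at hmm
    have h2 := hF2 m m.2
    have h2' := hF2 m' m'.2
    have h1' := hF1 m' m'.2
    rw [hmm] at h2
    have heq : v (F m' m'.2) 0 * ((m : ℕ) + 1) = v (F m' m'.2) 0 * ((m' : ℕ) + 1) := by
      rw [← h2, h2']
    have := Nat.eq_of_mul_eq_mul_left (by omega : 0 < v (F m' m'.2) 0) heq
    exact Subtype.ext (by omega)
  have hfin : Finite I := Finite.of_injective _ hinj
  exact not_finite_iff_infinite.mpr (Set.infinite_coe_iff.mpr hIinf2) hfin
end
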